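/- arXiv:1712.00274 — 5 statements merged into one kernel-verified Lean document; each statement's English description precedes it below -/
import Mathlib

section
/- For every integer n ≥ 2 and real c with 0 ≤ c < 1, the equation z^n = 1 - n·c + n·z has a unique solution z in the open interval (1, ∞). -/
theorem silent_duel_unique_root (n : ℕ) (hn : 2 ≤ n) (c : ℝ) (hc0 : 0 ≤ c) (hc1 : c < 1) :
    ∃! z : ℝ, 1 < z ∧ z ^ n = 1 - n * c + n * z := by
  have hn0 : (0:ℝ) < n := by positivity
  set f : ℝ → ℝ := fun z => z ^ n - n * z with hf
  have hcont : Continuous f := by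
    exact (continuous_pow n).sub (continuous_const.mul continuous_id)
  have hmono : StrictMonoOn f (Set.Ici 1) := by
    apply strictMonoOn_of_deriv_pos (convex_Ici 1) hcont.continuousOn
    intro x hx
    rw [interior_Ici] at hx
    have hx1 : (1:ℝ) < x := hx
    have hd : HasDerivAt f ((n:ℝ) * x ^ (n - 1) - (n:ℝ) * 1) x :=
      (hasDerivAt_pow n x).sub ((hasDerivAt_id x).const_mul (n:ℝ))
    rw [hd.deriv]
    have hpow : (1:ℝ) < x ^ (n - 1) := by
      apply one_lt_pow₀ hx1
      omega
    nlinarith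
  set t : ℝ := 1 - n * c with ht
  have hf1 : f 1 = 1 - n := by simp [hf]
  have hft : f 1 < t := by
    have : (n:ℝ) * c < n := by nlinarith
    simp only [hf1, ht]; linarith
  set M : ℝ := (n:ℝ) + 2 with hM
  have h1M : (1:ℝ) ≤ M := by linarith
  have hMt : t ≤ f M := by
    have h2 : M ^ 2 ≤ M ^ n := pow_le_pow_right₀ (by linarith) hn
    have hM2 : M ^ 2 - n * M = 2 * M := by simp only [hM]; ring
    have : t ≤ 1 := by
      have : 0 ≤ (n:ℝ) * c := by positivity
      linarith
    simp only [hf]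
    nlinarith
  obtain ⟨z, hz, hzt⟩ := intermediate_value_Icc h1M hcont.continuousOn
      (Set.mem_Icc.mpr ⟨le_of_lt hft, hMt⟩)
  have hz1 : 1 < z := by
    rcases lt_or_eq_of_le hz.1 with h | h
    · exact h
    · exfalso; rw [← h] at hzt; linarith [hft, hzt.le, hzt.ge]
  refine ⟨z, ⟨hz1, ?_⟩, ?_⟩
  · have : z ^ n - n * z = t := hzt
    simp only [ht] at this; linarith
  · rintro y ⟨hy1, hy⟩
    have hfy : f y = t := by simp only [hf, ht]; linarith
    have hfz : f z = t := hzt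
    exact hmono.injOn (Set.mem_Ici.mpr hy1.le) (Set.mem_Ici.mpr hz1.le)
      (by rw [hfy, hfz])
end

section
/- For every integer n ≥ 2, setting c = 1/n, v = 1/n and p = (1/n)^(1/(n-1)) satisfy both the polynomial relation (1/p)^n = 1 - n·c + n·(1/p) and v = p^(n-1), and the upper support endpoint is b = (1 - v)/(1 - c·v) = n/(n+1). -/
theorem constant_sum_case (n : ℕ) (hn : 2 ≤ n) (c v p : ℝ)
    (hc : c = 1 / n) (hv : v = 1 / n)
    (hp : p = (1 / (n : ℝ)) ^ ((1 : ℝ) / ((n : ℝ) - 1))) :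
    (1 / p) ^ n = 1 - n * c + n * (1 / p) ∧ v = p ^ (n - 1) ∧
      (1 - v) / (1 - c * v) = n / (n + 1) := by
  have hn1 : (1 : ℝ) ≤ (n : ℝ) := by exact_mod_cast Nat.one_le_of_lt hn
  have hn0 : (0 : ℝ) < n := by linarith
  have hne : ((n : ℝ) - 1) ≠ 0 := by
    have : (2 : ℝ) ≤ n := by exact_mod_cast hn
    linarith
  have hbase : (0 : ℝ) < 1 / n := by positivity
  have hppos : 0 < p := by rw [hp]; positivity
  have hkey : p ^ (n - 1) = 1 / n := by
    rw [hp, ← Real.rpow_natCast ((1 / (n : ℝ)) ^ ((1:ℝ) / ((n:ℝ) - 1))) (n - 1),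
      ← Real.rpow_mul hbase.le]
    have hcast : ((n - 1 : ℕ) : ℝ) = (n : ℝ) - 1 := by
      have := Nat.cast_sub (Nat.one_le_of_lt hn) (R := ℝ)
      simpa using this
    rw [hcast, div_mul_cancel₀ _ hne, Real.rpow_one]
  have hinv : (1 / p) ^ (n - 1) = n := by
    rw [div_pow, one_pow, hkey]
    field_simp
  have hnsplit : n = (n - 1) + 1 := (Nat.succ_pred_eq_of_pos (by omega)).symm
  refine ⟨?_, ?_, ?_⟩
  · rw [hnsplit, pow_succ, hinv, hc]
    field_simp
    rw [← hnsplit]; ring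
  · rw [hv, hkey]
  · rw [hv, hc]
    have h1 : (1 : ℝ) - 1 / n * (1 / n) = ((n : ℝ) ^ 2 - 1) / n ^ 2 := by
      field_simp
    have h2 : (1 : ℝ) - 1 / n = ((n : ℝ) - 1) / n := by field_simp
    rw [h1, h2]
    have hnp1 : (n : ℝ) + 1 ≠ 0 := by positivity
    have : ((n : ℝ) ^ 2 - 1) = ((n : ℝ) - 1) * ((n : ℝ) + 1) := by ring
    rw [this]
    field_simp
end

section
/- Let n ≥ 2, 0 ≤ c < 1, and suppose p ∈ (0,1) satisfies n·p^(n-1) = 1 - p^n + n·c·p^n, with v = p^(n-1) and b = (1 - v)/(1 - c·v). Define F(y) = p·((1 - c·y)/(1 - y))^(1/(n-1)) for y ∈ [0, b] and F(y) = 1 for y ∈ (b, 1]. Then for every y ∈ [0, 1), (1 - y)·F(y)^(n-1) + c·y·p^(n-1) ≤ v, with equality exactly for y ∈ [0, b]. -/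
theorem silent_duel_no_profitable_deviation (n : ℕ) (hn : 2 ≤ n) (c : ℝ)
    (hc0 : 0 ≤ c) (hc1 : c < 1) (p : ℝ) (hp0 : 0 < p) (hp1 : p < 1)
    (heq : n * p ^ (n - 1) = 1 - p ^ n + n * c * p ^ n) (v b : ℝ)
    (hv : v = p ^ (n - 1)) (hb : b = (1 - v) / (1 - c * v))
    (F : ℝ → ℝ)
    (hF : ∀ y, F y = if y ≤ b then p * ((1 - c * y) / (1 - y)) ^ ((1 : ℝ) / ((n : ℝ) - 1)) else 1) :
    ∀ y, 0 ≤ y → y < 1 →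
      (1 - y) * F y ^ (n - 1) + c * y * p ^ (n - 1) ≤ v ∧
      ((1 - y) * F y ^ (n - 1) + c * y * p ^ (n - 1) = v ↔ y ∈ Set.Icc 0 b) := by
  intro y hy0 hy1
  have hnR : (2:ℝ) ≤ (n:ℝ) := by exact_mod_cast hn
  have hv0 : 0 < v := by rw [hv]; positivity
  have hv1 : v < 1 := by
    rw [hv]; exact pow_lt_one₀ hp0.le hp1 (by omega)
  have hcv : c * v < 1 := by nlinarith
  have hbden : 0 < 1 - c * v := by linarith
  have hkey : y ≤ b → (1 - y) * F y ^ (n - 1) + c * y * p ^ (n - 1) = v := by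
    intro hyb
    have h1y : 0 < 1 - y := by linarith
    have hcy : 0 < 1 - c * y := by nlinarith
    have hr : 0 ≤ (1 - c * y) / (1 - y) := by positivity
    rw [hF y, if_pos hyb, mul_pow]
    have hpow : (((1 - c * y) / (1 - y)) ^ ((1:ℝ) / ((n:ℝ) - 1))) ^ (n - 1)
        = (1 - c * y) / (1 - y) := by
      rw [← Real.rpow_natCast (((1 - c * y) / (1 - y)) ^ ((1:ℝ) / ((n:ℝ) - 1))) (n-1),
          ← Real.rpow_mul hr]
      have hcast : ((n - 1 : ℕ) : ℝ) = (n:ℝ) - 1 := by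
        push_cast [Nat.cast_sub (by omega : 1 ≤ n)]; ring
      rw [hcast, one_div, inv_mul_cancel₀ (by linarith), Real.rpow_one]
    rw [hpow, hv]
    field_simp
    ring
  constructor
  · rcases le_or_gt y b with hyb | hyb
    · exact (hkey hyb).le
    · rw [hF y, if_neg (not_le.mpr hyb), one_pow, ← hv]
      have hby : b < y := hyb
      rw [hb, div_lt_iff₀ hbden] at hby
      nlinarith
  · constructor
    · intro heqv
      rcases le_or_gt y b with hyb | hyb
      · exact ⟨hy0, hyb⟩
      · exfalso
        rw [hF y, if_neg (not_le.mpr hyb), one_pow, ← hv] at heqv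
        have hby : b < y := hyb
        rw [hb, div_lt_iff₀ hbden] at hby
        nlinarith
    · intro hy; exact hkey hy.2
end

section
/- Let n ≥ 2 and 0 ≤ c < 1, and let v(c) = p(c)^(n-1) where 1/p(c) is the unique solution in (1, ∞) of z^n = 1 - n·c + n·z. Then v is strictly increasing in c on [0, 1). -/
theorem silent_duel_value_increasing_in_c (n : ℕ) (hn : 2 ≤ n)
    (c₁ c₂ : ℝ) (hc₁ : 0 ≤ c₁) (hc : c₁ < c₂) (hc₂ : c₂ < 1)
    (z₁ z₂ : ℝ) (hz₁ : 1 < z₁) (hz₂ : 1 < z₂)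
    (heq₁ : z₁ ^ n = 1 - n * c₁ + n * z₁) (heq₂ : z₂ ^ n = 1 - n * c₂ + n * z₂) :
    (1 / z₁) ^ (n - 1) < (1 / z₂) ^ (n - 1) := by
  have hn0 : (0:ℝ) < n := by positivity
  have hmono : StrictMonoOn (fun x : ℝ => x ^ n - n * x) (Set.Ici 1) := by
    apply strictMonoOn_of_deriv_pos (convex_Ici 1)
    · fun_prop
    · intro x hx
      rw [interior_Ici] at hx
      have hx1 : (1:ℝ) < x := hx
      have : deriv (fun x : ℝ => x ^ n - n * x) x = n * x ^ (n - 1) - n := by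
        simp [deriv_sub, mul_comm]
      rw [this]
      have hpow : (1:ℝ) < x ^ (n - 1) :=
        one_lt_pow₀ hx1 (by omega)
      nlinarith
  have hf2 : z₂ ^ n - n * z₂ < z₁ ^ n - n * z₁ := by
    rw [heq₁, heq₂]; nlinarith
  have hzz : z₂ < z₁ := by
    by_contra h
    push_neg at h
    have := hmono.le_iff_le (Set.mem_Ici.mpr hz₁.le) (Set.mem_Ici.mpr hz₂.le)
    have : z₁ ^ n - n * z₁ ≤ z₂ ^ n - n * z₂ := this.mpr h
    linarith
  have h1 : 1 / z₁ < 1 / z₂ := by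
    apply one_div_lt_one_div_of_lt <;> linarith
  exact pow_lt_pow_left₀ h1 (by positivity) (by omega)
end

section
/- For n ≥ 2 and c = 1/n: if the miss probability p = (1/n)^(1/(n-1)), then p is strictly increasing in n and p → 1 as n → ∞, while the equilibrium payoff v = 1/n → 0. -/
open Real Filter

private lemma aux_anti : StrictAntiOn (fun x : ℝ => Real.log x / (x - 1)) (Set.Ici 2) := by
  have hder : ∀ x : ℝ, 2 < x →
      HasDerivAt (fun x : ℝ => Real.log x / (x - 1))
        ((x⁻¹ * (x - 1) - Real.log x * 1) / (x - 1) ^ 2) x := by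
    intro x hx
    have h1 : HasDerivAt Real.log x⁻¹ x := Real.hasDerivAt_log (by linarith)
    have h2 : HasDerivAt (fun x : ℝ => x - 1) 1 x := (hasDerivAt_id x).sub_const 1
    exact h1.div h2 (by linarith)
  apply strictAntiOn_of_deriv_neg (convex_Ici 2)
  · apply ContinuousOn.div
    · exact Real.continuousOn_log.mono (by intro x hx; simp at hx ⊢; intro h; linarith)
    · exact (continuous_id.sub continuous_const).continuousOn
    · intro x hx; simp at hx; intro h; linarith
  · intro x hx
    rw [interior_Ici] at hx
    simp only [Set.mem_Ioi] at hx
    rw [(hder x hx).deriv]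
    apply div_neg_of_neg_of_pos
    · have hlog : 1 - x⁻¹ < Real.log x := by
        have := Real.log_lt_sub_one_of_pos (x := x⁻¹) (by positivity)
          (by intro h; rw [inv_eq_one] at h; linarith)
        rw [Real.log_inv] at this; linarith
      have hx0 : x ≠ 0 := by linarith
      have : x⁻¹ * (x - 1) = 1 - x⁻¹ := by field_simp
      rw [this]; linarith
    · have : x - 1 > 0 := by linarith
      positivity

private lemma aux_eq : ∀ k : ℕ, 2 ≤ (k : ℝ) →
    (1 / (k : ℝ)) ^ ((1 : ℝ) / ((k : ℝ) - 1)) = Real.exp (-(Real.log k / ((k : ℝ) - 1))) := by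
  intro k hk
  rw [Real.rpow_def_of_pos (by positivity), one_div (k : ℝ), Real.log_inv]
  congr 1
  ring

theorem constant_sum_p_increasing_to_one :
    StrictMonoOn (fun n : ℕ => (1 / (n : ℝ)) ^ ((1 : ℝ) / ((n : ℝ) - 1))) (Set.Ici 2) ∧
      Filter.Tendsto (fun n : ℕ => (1 / (n : ℝ)) ^ ((1 : ℝ) / ((n : ℝ) - 1)))
        Filter.atTop (nhds 1) ∧
      Filter.Tendsto (fun n : ℕ => (1 : ℝ) / n) Filter.atTop (nhds 0) := by
  refine ⟨?_, ?_, tendsto_one_div_atTop_nhds_zero_nat⟩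
  · intro m hm n hn hmn
    have hm' : (2 : ℝ) ≤ (m : ℝ) := by exact_mod_cast hm
    have hn' : (2 : ℝ) ≤ (n : ℝ) := by exact_mod_cast hn
    have hmn' : (m : ℝ) < (n : ℝ) := by exact_mod_cast hmn
    have key := aux_anti hm' hn' hmn'
    simp only
    rw [aux_eq m hm', aux_eq n hn']
    exact Real.exp_lt_exp.mpr (by simpa using neg_lt_neg key)
  · have t0 : Tendsto (fun x : ℝ => Real.log x ^ 1 / (1 * x + (-1))) atTop (nhds 0) :=
      Real.tendsto_pow_log_div_mul_add_atTop 1 (-1) 1 one_ne_zero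
    have t1 : Tendsto (fun x : ℝ => Real.log x / (x - 1)) atTop (nhds 0) := by
      refine t0.congr (fun x => ?_)
      ring_nf
    have t2 : Tendsto (fun n : ℕ => Real.log n / ((n : ℝ) - 1)) atTop (nhds 0) :=
      t1.comp tendsto_natCast_atTop_atTop
    have t3 : Tendsto (fun n : ℕ => Real.exp (-(Real.log n / ((n : ℝ) - 1)))) atTop (nhds 1) := by
      have := (Real.continuous_exp.tendsto 0).comp (by simpa using t2.neg : Tendsto (fun n : ℕ => -(Real.log n / ((n : ℝ) - 1))) atTop (nhds 0))
      simpa [Function.comp_def] using this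
    refine t3.congr' ?_
    filter_upwards [eventually_ge_atTop 2] with n hn
    exact (aux_eq n (by exact_mod_cast hn)).symm
end
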